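/- For every k ≥ 2, the quotient group G_{k+1}^k / K_k is naturally isomorphic to the free product (H_k / K_k) * ⟨b_{k+1}⟩, where ⟨b_{k+1}⟩ ≅ ℤ/2: precisely, K_k is a normal subgroup of G_{k+1}^k contained in H_k, and the homomorphism from the free product (H_k ⧸ K_k) * (ℤ/2) to G_{k+1}^k ⧸ K_k, induced on the first factor by the inclusion H_k → G_{k+1}^k and sending the generator of ℤ/2 to the class of b_{k+1}, is an isomorphism. -/

import Mathlib

/-- The relators of the group `G_{k+1}^k`: the squares `b_i²` of all generators, together with
`(b_{σ(1)} b_{σ(2)} ⋯ b_{σ(k+1)})²` for every permutation `σ` of the `k+1` generators. -/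
def relsG (k : ℕ) : Set (FreeGroup (Fin (k + 1))) :=
  (Set.range fun i : Fin (k + 1) => FreeGroup.of i ^ 2) ∪
    (Set.range fun σ : Equiv.Perm (Fin (k + 1)) =>
      ((List.ofFn fun j : Fin (k + 1) => FreeGroup.of (σ j)).prod) ^ 2)

/-- The group `G_{k+1}^k`. -/
abbrev Gnk (k : ℕ) : Type := PresentedGroup (relsG k)

/-- The subgroup `H_k` of `G_{k+1}^k` generated by the (images of the) first `k` generators
`b_1, …, b_k`. -/
def Hk (k : ℕ) : Subgroup (Gnk k) :=
  Subgroup.closure (Set.range fun i : Fin k =>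
    PresentedGroup.of (rels := relsG k) (Fin.castSucc i))

/-- The subgroup `K_k` of `G_{k+1}^k` generated by the products
`B_σ = b_{σ(1)} b_{σ(2)} ⋯ b_{σ(k)}` over all permutations `σ` of `{1, …, k}`. -/
def Kk (k : ℕ) : Subgroup (Gnk k) :=
  Subgroup.closure (Set.range fun σ : Equiv.Perm (Fin k) =>
    ((List.ofFn fun j : Fin k =>
      PresentedGroup.of (rels := relsG k) (Fin.castSucc (σ j))).prod))


namespace Stmt11

variable {k : ℕ}

/-- the generators of `Gnk k` -/
abbrev bG (k : ℕ) (i : Fin (k + 1)) : Gnk k := PresentedGroup.of (rels := relsG k) i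

/-- word in the generators indexed by a list over `Fin (k+1)` -/
def WG (k : ℕ) (l : List (Fin (k + 1))) : Gnk k := (l.map (bG k)).prod

lemma rels_one {r : FreeGroup (Fin (k + 1))} (hr : r ∈ relsG k) :
    PresentedGroup.mk (relsG k) r = 1 := by
  have : r ∈ Subgroup.normalClosure (relsG k) := Subgroup.subset_normalClosure hr
  exact (QuotientGroup.eq_one_iff r).2 this

lemma sq_one (i : Fin (k + 1)) : bG k i * bG k i = 1 := by
  have : PresentedGroup.mk (relsG k) (FreeGroup.of i ^ 2) = 1 :=
    rels_one (Or.inl ⟨i, rfl⟩)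
  rw [map_pow] at this
  rw [← pow_two]
  exact this

lemma inv_bG (i : Fin (k + 1)) : (bG k i)⁻¹ = bG k i :=
  inv_eq_of_mul_eq_one_right (sq_one i)

/-- lists that enumerate `Fin n` are exactly `List.ofFn σ` for permutations `σ` -/
lemma exists_perm_ofFn {n : ℕ} {l : List (Fin n)} (h : l.Perm (List.finRange n)) :
    ∃ σ : Equiv.Perm (Fin n), l = List.ofFn σ := by
  have hlen : l.length = n := by simpa using h.length_eq
  have hnd : l.Nodup := h.nodup_iff.2 (List.nodup_finRange n)
  have hinj : Function.Injective (fun j : Fin n => l.get (Fin.cast hlen.symm j)) := by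
    intro a b hab
    have := (List.nodup_iff_injective_get.1 hnd) hab
    simpa [Fin.ext_iff] using this
  obtain ⟨σ, hσ⟩ : ∃ σ : Equiv.Perm (Fin n), ∀ j, σ j = l.get (Fin.cast hlen.symm j) := by
    have hbij := (Finite.injective_iff_bijective).1 hinj
    exact ⟨Equiv.ofBijective _ hbij, fun j => rfl⟩
  refine ⟨σ, ?_⟩
  apply List.ext_getElem (by simpa using hlen)
  intro i h1 h2
  simp only [List.getElem_ofFn]
  rw [hσ]
  simp [List.get]

lemma ofFn_perm {n : ℕ} (σ : Equiv.Perm (Fin n)) : (List.ofFn σ).Perm (List.finRange n) := by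
  rw [List.ofFn_eq_map]
  exact σ.map_finRange_perm

/-- relator: the square of any enumeration word is 1 -/
lemma WG_sq {l : List (Fin (k + 1))} (h : l.Perm (List.finRange (k + 1))) :
    WG k l * WG k l = 1 := by
  obtain ⟨σ, rfl⟩ := exists_perm_ofFn h
  have : PresentedGroup.mk (relsG k)
      (((List.ofFn fun j : Fin (k + 1) => FreeGroup.of (σ j)).prod) ^ 2) = 1 :=
    rels_one (Or.inr ⟨σ, rfl⟩)
  rw [map_pow, map_list_prod] at this
  rw [← pow_two]
  convert this using 3
  simp [WG, List.map_ofFn, Function.comp_def, bG, PresentedGroup.of]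

end Stmt11
namespace Stmt11

variable {k : ℕ}

/-- generators of `Hk` -/
abbrev b' (k : ℕ) (i : Fin k) : Gnk k := bG k i.castSucc

def W (k : ℕ) (l : List (Fin k)) : Gnk k := (l.map (b' k)).prod

lemma W_nil : W k [] = 1 := rfl

lemma W_cons (x : Fin k) (l : List (Fin k)) : W k (x :: l) = b' k x * W k l := by
  simp [W]

lemma W_append (u v : List (Fin k)) : W k (u ++ v) = W k u * W k v := by
  simp [W]

lemma W_eq_WG (l : List (Fin k)) : W k l = WG k (l.map Fin.castSucc) := by
  simp [W, WG, List.map_map, Function.comp_def]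

lemma W_reverse (l : List (Fin k)) : (W k l)⁻¹ = W k l.reverse := by
  induction l with
  | nil => simp [W]
  | cons x l ih =>
    rw [W_cons, List.reverse_cons, W_append, mul_inv_rev, ih]
    simp [W, inv_bG]

/-- the enumeration-word generating set for `Kk` -/
def S (k : ℕ) : Set (Gnk k) :=
  {x | ∃ l : List (Fin k), l.Perm (List.finRange k) ∧ x = W k l}

lemma Kk_eq : Kk k = Subgroup.closure (S k) := by
  unfold Kk
  congr 1
  ext x
  constructor
  · rintro ⟨σ, rfl⟩
    refine ⟨List.ofFn σ, ofFn_perm σ, ?_⟩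
    simp [W, List.map_ofFn, Function.comp_def, b', bG]
  · rintro ⟨l, hl, rfl⟩
    obtain ⟨σ, rfl⟩ := exists_perm_ofFn hl
    refine ⟨σ, ?_⟩
    simp [W, List.map_ofFn, Function.comp_def, b', bG]

lemma S_mem_Kk {x : Gnk k} (h : x ∈ S k) : x ∈ Kk k := by
  rw [Kk_eq]; exact Subgroup.subset_closure h

/-- `finRange (k+1)` is a permutation of `last :: castSucc's` -/
lemma finRange_succ_perm :
    (List.finRange (k + 1)).Perm
      (Fin.last k :: (List.finRange k).map Fin.castSucc) := by
  have h1 : List.finRange (k + 1) =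
      ((List.finRange k).map Fin.castSucc) ++ [Fin.last k] := by
    rw [← List.ofFn_id (k+1), List.ofFn_succ']
    simp [List.ofFn_eq_map, List.concat_eq_append]
  rw [h1]
  exact List.perm_append_singleton _ _

/-- conjugation by the last generator inverts enumeration words -/
lemma conj_last (l : List (Fin k)) (hl : l.Perm (List.finRange k)) :
    bG k (Fin.last k) * W k l * (bG k (Fin.last k))⁻¹ = (W k l)⁻¹ := by
  have hperm : (Fin.last k :: l.map Fin.castSucc).Perm (List.finRange (k + 1)) := by
    refine List.Perm.trans ?_ finRange_succ_perm.symm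
    exact List.Perm.cons _ (hl.map _)
  have hsq := WG_sq hperm
  have hWG : WG k (Fin.last k :: l.map Fin.castSucc) = bG k (Fin.last k) * W k l := by
    rw [W_eq_WG]; simp [WG]
  rw [hWG] at hsq
  rw [inv_bG]
  have : (bG k (Fin.last k) * W k l * bG k (Fin.last k)) * W k l = 1 := by
    calc (bG k (Fin.last k) * W k l * bG k (Fin.last k)) * W k l
        = (bG k (Fin.last k) * W k l) * (bG k (Fin.last k) * W k l) := by group
      _ = 1 := hsq
  exact eq_inv_of_mul_eq_one_left this

/-- conjugation by a small generator keeps enumeration words in `Kk` -/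
lemma conj_small (i : Fin k) {l : List (Fin k)} (hl : l.Perm (List.finRange k)) :
    b' k i * W k l * (b' k i)⁻¹ ∈ Kk k := by
  have hi : i ∈ l := (hl.mem_iff).2 (List.mem_finRange i)
  obtain ⟨u, v, rfl⟩ := List.append_of_mem hi
  have hx : (b' k i)⁻¹ = b' k i := inv_bG _
  have key : b' k i * W k (u ++ i :: v) * (b' k i)⁻¹ =
      W k (i :: (u ++ v)) * (W k (u ++ i :: v))⁻¹ * W k ((u ++ v) ++ [i]) := by
    simp only [W_cons, W_append, W_nil, mul_one, mul_inv_rev, hx]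
    group
  rw [key]
  have h1 : W k (i :: (u ++ v)) ∈ Kk k :=
    S_mem_Kk ⟨_, (List.perm_middle.symm.trans hl), rfl⟩
  have h2 : W k (u ++ i :: v) ∈ Kk k := S_mem_Kk ⟨_, hl, rfl⟩
  have h3 : W k ((u ++ v) ++ [i]) ∈ Kk k :=
    S_mem_Kk ⟨_, ((List.perm_append_singleton _ _).trans
      (List.perm_middle.symm.trans hl)), rfl⟩
  exact mul_mem (mul_mem h1 (inv_mem h2)) h3

lemma conj_gen_mem (i : Fin (k + 1)) {x : Gnk k} (hx : x ∈ Kk k) :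
    bG k i * x * (bG k i)⁻¹ ∈ Kk k := by
  rw [Kk_eq] at hx
  induction hx using Subgroup.closure_induction with
  | mem y hy =>
    obtain ⟨l, hl, rfl⟩ := hy
    induction i using Fin.lastCases with
    | last =>
      rw [conj_last l hl, W_reverse]
      exact S_mem_Kk ⟨_, (l.reverse_perm.trans hl), rfl⟩
    | cast i₀ => exact conj_small i₀ hl
  | one => simpa using one_mem (Kk k)
  | mul y z hy hz hy' hz' =>
    have : bG k i * (y * z) * (bG k i)⁻¹ =
        (bG k i * y * (bG k i)⁻¹) * (bG k i * z * (bG k i)⁻¹) := by group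
    rw [this]; exact mul_mem hy' hz'
  | inv y hy hy' =>
    have : bG k i * y⁻¹ * (bG k i)⁻¹ = (bG k i * y * (bG k i)⁻¹)⁻¹ := by group
    rw [this]; exact inv_mem hy'

lemma Kk_normal : (Kk k).Normal := by
  rw [← Subgroup.normalizer_eq_top_iff, eq_top_iff, ← PresentedGroup.closure_range_of (relsG k),
    Subgroup.closure_le]
  rintro _ ⟨i, rfl⟩
  rw [SetLike.mem_coe, Subgroup.mem_normalizer_iff]
  intro n
  constructor
  · exact fun hn => conj_gen_mem i hn
  · intro hn
    have := conj_gen_mem i hn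
    have heq : bG k i * (bG k i * n * (bG k i)⁻¹) * (bG k i)⁻¹ = n := by
      rw [inv_bG]
      calc bG k i * (bG k i * n * bG k i) * bG k i
          = (bG k i * bG k i) * n * (bG k i * bG k i) := by group
        _ = n := by rw [sq_one i]; group
    rwa [heq] at this

lemma Kk_le_Hk : Kk k ≤ Hk k := by
  rw [Kk_eq, Subgroup.closure_le]
  rintro _ ⟨l, hl, rfl⟩
  refine SetLike.mem_coe.2 (Subgroup.list_prod_mem _ ?_)
  intro x hx
  simp only [List.mem_map] at hx
  obtain ⟨j, _, rfl⟩ := hx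
  exact Subgroup.subset_closure ⟨j, rfl⟩

lemma W_mem_Hk (l : List (Fin k)) : W k l ∈ Hk k := by
  refine Subgroup.list_prod_mem _ ?_
  intro x hx
  simp only [List.mem_map] at hx
  obtain ⟨j, _, rfl⟩ := hx
  exact Subgroup.subset_closure ⟨j, rfl⟩

end Stmt11
namespace Stmt11

variable {k : ℕ}

instance instKN (k : ℕ) : (Kk k).Normal := Kk_normal

instance instKHN (k : ℕ) : ((Kk k).subgroupOf (Hk k)).Normal :=
  Kk_normal.subgroupOf _

abbrev Q (k : ℕ) := Hk k ⧸ (Kk k).subgroupOf (Hk k)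
abbrev GK (k : ℕ) := Gnk k ⧸ Kk k
abbrev Cop (k : ℕ) := Monoid.Coprod (Q k) (Multiplicative (ZMod 2))

def tG (k : ℕ) : GK k := QuotientGroup.mk (bG k (Fin.last k))

lemma tG_sq : tG k * tG k = 1 := by
  show QuotientGroup.mk _ * QuotientGroup.mk _ = _
  rw [← QuotientGroup.mk_mul, sq_one, QuotientGroup.mk_one]

lemma tG_pow_mod (m : ℕ) : tG k ^ (m % 2) = tG k ^ m := by
  conv_rhs => rw [← Nat.div_add_mod m 2]
  rw [pow_add, pow_mul, pow_two, tG_sq, one_pow, one_mul]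

/-- the hom `ℤ/2 →* G/K` sending the generator to `b_{k+1}` -/
def f₂ (k : ℕ) : Multiplicative (ZMod 2) →* GK k where
  toFun x := tG k ^ (Multiplicative.toAdd x).val
  map_one' := by
    show tG k ^ (Multiplicative.toAdd (1 : Multiplicative (ZMod 2))).val = 1
    rw [show (Multiplicative.toAdd (1 : Multiplicative (ZMod 2))).val = 0 from rfl, pow_zero]
  map_mul' x y := by
    show tG k ^ (Multiplicative.toAdd x + Multiplicative.toAdd y).val = _
    rw [ZMod.val_add, tG_pow_mod, pow_add]

lemma f₂_ofAdd_one : f₂ k (Multiplicative.ofAdd 1) = tG k := by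
  show tG k ^ (1 : ZMod 2).val = tG k
  rw [show (1 : ZMod 2).val = 1 from rfl, pow_one]

/-- the hom `H/K →* G/K` induced by inclusion -/
def f₁ (k : ℕ) : Q k →* GK k :=
  QuotientGroup.lift _ ((QuotientGroup.mk' (Kk k)).comp (Hk k).subtype)
    (by
      intro h hh
      rw [Subgroup.mem_subgroupOf] at hh
      simpa [QuotientGroup.eq_one_iff] using hh)

lemma f₁_mk (h : Hk k) : f₁ k (QuotientGroup.mk h) = QuotientGroup.mk (h : Gnk k) := rfl

def fC (k : ℕ) : Cop k →* GK k := Monoid.Coprod.lift (f₁ k) (f₂ k)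

lemma b'_mem_Hk (i : Fin k) : b' k i ∈ Hk k := Subgroup.subset_closure ⟨i, rfl⟩

/-- images of the generators in the coproduct -/
def F (k : ℕ) : Fin (k + 1) → Cop k :=
  Fin.lastCases (Monoid.Coprod.inr (Multiplicative.ofAdd 1))
    (fun i => Monoid.Coprod.inl (QuotientGroup.mk (⟨b' k i, b'_mem_Hk i⟩ : Hk k)))

lemma F_last : F k (Fin.last k) = Monoid.Coprod.inr (Multiplicative.ofAdd 1) :=
  Fin.lastCases_last ..

lemma F_castSucc (i : Fin k) :
    F k i.castSucc = Monoid.Coprod.inl (QuotientGroup.mk (⟨b' k i, b'_mem_Hk i⟩ : Hk k)) :=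
  Fin.lastCases_castSucc ..

lemma inr_sq : Monoid.Coprod.inr (M := Q k) (Multiplicative.ofAdd (1 : ZMod 2)) *
    Monoid.Coprod.inr (Multiplicative.ofAdd 1) = 1 := by
  rw [← map_mul]
  have : Multiplicative.ofAdd (1 : ZMod 2) * Multiplicative.ofAdd 1 = 1 := by decide
  rw [this, map_one]

lemma prod_map_F (w : List (Fin k)) :
    ((w.map Fin.castSucc).map (F k)).prod =
      Monoid.Coprod.inl (QuotientGroup.mk (⟨W k w, W_mem_Hk w⟩ : Hk k)) := by
  induction w with
  | nil =>
    have : (⟨W k [], W_mem_Hk []⟩ : Hk k) = 1 := rfl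
    simp [this]
  | cons x w ih =>
    have hsub : ((⟨b' k x, b'_mem_Hk x⟩ : Hk k) * ⟨W k w, W_mem_Hk w⟩) =
        ⟨W k (x :: w), W_mem_Hk (x :: w)⟩ := Subtype.ext (W_cons x w).symm
    rw [List.map_cons, List.map_cons, List.prod_cons, ih, F_castSucc, ← map_mul,
      ← QuotientGroup.mk_mul, hsub]

/-- class of a `K`-word in `Q` is trivial -/
lemma mkQ_eq_one {w : List (Fin k)} (hw : w.Perm (List.finRange k)) :
    (QuotientGroup.mk (⟨W k w, W_mem_Hk w⟩ : Hk k) : Q k) = 1 := by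
  rw [QuotientGroup.eq_one_iff, Subgroup.mem_subgroupOf]
  exact S_mem_Kk ⟨w, hw, rfl⟩

lemma lift_word_sq {m : List (Fin (k + 1))} (hm : m.Perm (List.finRange (k + 1))) :
    ((m.map (F k)).prod) * ((m.map (F k)).prod) = 1 := by
  -- split the list at `last k`
  have hlast : Fin.last k ∈ m := hm.mem_iff.2 (List.mem_finRange _)
  obtain ⟨u', v', rfl⟩ := List.append_of_mem hlast
  have hnd : (u' ++ Fin.last k :: v').Nodup := hm.nodup_iff.2 (List.nodup_finRange _)
  have hlast_u' : Fin.last k ∉ u' := by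
    intro hmem
    exact (List.disjoint_of_nodup_append hnd) hmem List.mem_cons_self
  have hlast_v' : Fin.last k ∉ v' := by
    have := (List.nodup_append.1 hnd).2.1
    exact (List.nodup_cons.1 this).1
  have hunmap : ∀ w' : List (Fin (k + 1)), Fin.last k ∉ w' →
      ∃ w : List (Fin k), w' = w.map Fin.castSucc := by
    intro w' hw'
    induction w' with
    | nil => exact ⟨[], rfl⟩
    | cons x w' ih =>
      obtain ⟨y, hy⟩ := Fin.exists_castSucc_eq.2 (fun h => hw' (h ▸ List.mem_cons_self))
      obtain ⟨w, hw⟩ := ih (fun h => hw' (List.mem_cons_of_mem _ h))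
      exact ⟨y :: w, by rw [List.map_cons, hy, hw]⟩
  obtain ⟨u, rfl⟩ := hunmap u' hlast_u'
  obtain ⟨v, rfl⟩ := hunmap v' hlast_v'
  -- `u ++ v` enumerates `Fin k`
  have hperm : ((u ++ v).map Fin.castSucc).Perm ((List.finRange k).map Fin.castSucc) := by
    have h1 : (u.map Fin.castSucc ++ Fin.last k :: v.map Fin.castSucc).Perm
        (Fin.last k :: ((u ++ v).map Fin.castSucc)) := by
      rw [List.map_append]
      exact List.perm_middle
    have h2 := (h1.symm.trans hm).trans finRange_succ_perm
    exact h2.cons_inv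
  have huv : (u ++ v).Perm (List.finRange k) := by
    rw [List.perm_ext_iff_of_nodup ?nd (List.nodup_finRange k)]
    · intro a
      simp only [List.mem_finRange, iff_true]
      have : Fin.castSucc a ∈ (u ++ v).map Fin.castSucc :=
        hperm.mem_iff.2 (List.mem_map_of_mem (List.mem_finRange a))
      obtain ⟨b, hb, hba⟩ := List.mem_map.1 this
      rwa [Fin.castSucc_injective k hba] at hb
    case nd =>
      have := hperm.nodup_iff.2 ((List.nodup_finRange k).map (Fin.castSucc_injective k))
      exact this.of_map _
  have hvu : (v ++ u).Perm (List.finRange k) := (List.perm_append_comm).trans huv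
  -- compute the product
  set A := Monoid.Coprod.inl (M := Q k) (N := Multiplicative (ZMod 2))
    (QuotientGroup.mk (⟨W k u, W_mem_Hk u⟩ : Hk k)) with hA
  set B := Monoid.Coprod.inl (M := Q k) (N := Multiplicative (ZMod 2))
    (QuotientGroup.mk (⟨W k v, W_mem_Hk v⟩ : Hk k)) with hB
  set s := Monoid.Coprod.inr (M := Q k) (Multiplicative.ofAdd (1 : ZMod 2)) with hs
  have hprod : (((u.map Fin.castSucc ++ Fin.last k :: v.map Fin.castSucc)).map (F k)).prod
      = A * s * B := by
    rw [List.map_append, List.prod_append, List.map_cons, List.prod_cons, prod_map_F,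
      prod_map_F, F_last, mul_assoc]
  rw [hprod]
  have hAB : A * B = 1 := by
    have hsub : ((⟨W k u, W_mem_Hk u⟩ : Hk k) * ⟨W k v, W_mem_Hk v⟩) =
        ⟨W k (u ++ v), W_mem_Hk (u ++ v)⟩ := Subtype.ext (W_append u v).symm
    rw [hA, hB, ← map_mul, ← QuotientGroup.mk_mul, hsub, mkQ_eq_one huv, map_one]
  have hBA : B * A = 1 := by
    have hsub : ((⟨W k v, W_mem_Hk v⟩ : Hk k) * ⟨W k u, W_mem_Hk u⟩) =
        ⟨W k (v ++ u), W_mem_Hk (v ++ u)⟩ := Subtype.ext (W_append v u).symm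
    rw [hB, hA, ← map_mul, ← QuotientGroup.mk_mul, hsub, mkQ_eq_one hvu, map_one]
  have hss : s * s = 1 := inr_sq
  calc (A * s * B) * (A * s * B)
      = A * (s * (B * A) * s) * B := by group
    _ = A * (s * s) * B := by rw [hBA, mul_one]
    _ = A * B := by rw [hss, mul_one]
    _ = 1 := hAB

lemma hF : ∀ r ∈ relsG k, FreeGroup.lift (F k) r = 1 := by
  rintro r (⟨i, rfl⟩ | ⟨σ, rfl⟩)
  · rw [map_pow, FreeGroup.lift_apply_of, pow_two]
    induction i using Fin.lastCases with
    | last => rw [F_last]; exact inr_sq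
    | cast i₀ =>
      have hsub : ((⟨b' k i₀, b'_mem_Hk i₀⟩ : Hk k) * ⟨b' k i₀, b'_mem_Hk i₀⟩) = 1 :=
        Subtype.ext (sq_one i₀.castSucc)
      rw [F_castSucc, ← map_mul, ← QuotientGroup.mk_mul, hsub, QuotientGroup.mk_one, map_one]
  · rw [map_pow, map_list_prod, pow_two]
    have hmap : (List.ofFn fun j : Fin (k+1) => FreeGroup.of (σ j)).map (FreeGroup.lift (F k))
        = (List.ofFn σ).map (F k) := by
      rw [List.map_ofFn, List.map_ofFn]
      congr 1
      ext j
      exact FreeGroup.lift_apply_of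
    rw [hmap]
    exact lift_word_sq (ofFn_perm σ)

/-- the hom `G →* (H/K) * ℤ/2` -/
def g₀ (k : ℕ) : Gnk k →* Cop k := PresentedGroup.toGroup hF

lemma g₀_of (i : Fin (k + 1)) : g₀ k (bG k i) = F k i := PresentedGroup.toGroup.of hF

lemma g₀_H {h : Gnk k} (hh : h ∈ Hk k) :
    ∀ hh' : h ∈ Hk k, g₀ k h = Monoid.Coprod.inl (QuotientGroup.mk (⟨h, hh'⟩ : Hk k)) := by
  have hh2 : h ∈ Subgroup.closure
      (Set.range fun i : Fin k => PresentedGroup.of (rels := relsG k) (Fin.castSucc i)) := hh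
  induction hh2 using Subgroup.closure_induction with
  | mem x hx =>
    intro hh'
    obtain ⟨i, rfl⟩ := hx
    show g₀ k (bG k i.castSucc) =
      Monoid.Coprod.inl (QuotientGroup.mk (⟨bG k i.castSucc, hh'⟩ : Hk k))
    rw [g₀_of, F_castSucc]
  | one =>
    intro hh'
    rw [map_one]
    have : (⟨(1 : Gnk k), hh'⟩ : Hk k) = 1 := rfl
    rw [this, QuotientGroup.mk_one, map_one]
  | mul x y hx hy ihx ihy =>
    intro hh'
    rw [map_mul, ihx hx hx, ihy hy hy, ← map_mul, ← QuotientGroup.mk_mul]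
    rfl
  | inv x hx ihx =>
    intro hh'
    rw [map_inv, ihx hx hx, ← map_inv, ← QuotientGroup.mk_inv]
    rfl

lemma Kk_le_ker : Kk k ≤ (g₀ k).ker := by
  refine le_trans Kk_eq.le ?_
  rw [Subgroup.closure_le]
  rintro _ ⟨l, hl, rfl⟩
  rw [SetLike.mem_coe, MonoidHom.mem_ker, g₀_H (W_mem_Hk l) (W_mem_Hk l), mkQ_eq_one hl,
    map_one]

def gC (k : ℕ) : GK k →* Cop k := QuotientGroup.lift (Kk k) (g₀ k) Kk_le_ker

end Stmt11
namespace Stmt11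

variable {k : ℕ}

lemma hom_ext_zmod2 {M : Type*} [Monoid M] {f g : Multiplicative (ZMod 2) →* M}
    (h : f (Multiplicative.ofAdd 1) = g (Multiplicative.ofAdd 1)) : f = g := by
  have key : ∀ y : Multiplicative (ZMod 2), y = 1 ∨ y = Multiplicative.ofAdd 1 := by decide
  refine MonoidHom.ext fun x => ?_
  rcases key x with rfl | rfl
  · rw [map_one, map_one]
  · exact h

lemma gC_mk (x : Gnk k) : gC k (QuotientGroup.mk x) = g₀ k x := rfl

lemma gC_comp_fC : (gC k).comp (fC k) = MonoidHom.id (Cop k) := by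
  apply Monoid.Coprod.hom_ext
  · apply QuotientGroup.monoidHom_ext
    ext h
    show gC k (fC k (Monoid.Coprod.inl (QuotientGroup.mk h))) = Monoid.Coprod.inl _
    rw [fC, Monoid.Coprod.lift_apply_inl, f₁_mk, gC_mk, g₀_H h.2 h.2]
    rfl
  · apply hom_ext_zmod2
    show gC k (fC k (Monoid.Coprod.inr (Multiplicative.ofAdd 1))) = _
    rw [fC, Monoid.Coprod.lift_apply_inr, f₂_ofAdd_one, tG, gC_mk, g₀_of, F_last]
    rfl

lemma fC_comp_gC : (fC k).comp (gC k) = MonoidHom.id (GK k) := by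
  apply QuotientGroup.monoidHom_ext
  apply PresentedGroup.ext
  intro i
  show fC k (gC k (QuotientGroup.mk (bG k i))) = QuotientGroup.mk (bG k i)
  rw [gC_mk, g₀_of]
  induction i using Fin.lastCases with
  | last =>
    rw [F_last, fC, Monoid.Coprod.lift_apply_inr, f₂_ofAdd_one]
    rfl
  | cast i₀ =>
    rw [F_castSucc, fC, Monoid.Coprod.lift_apply_inl, f₁_mk]

def eC (k : ℕ) : Cop k ≃* GK k :=
  MonoidHom.toMulEquiv (fC k) (gC k) gC_comp_fC fC_comp_gC

end Stmt11

/-- For every `k ≥ 2`, the quotient group `G_{k+1}^k / K_k` is naturally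
isomorphic to the free product `(H_k / K_k) * ⟨b_{k+1}⟩` with `⟨b_{k+1}⟩ ≅ ℤ/2`: precisely,
`K_k` is a normal subgroup of `G_{k+1}^k` contained in `H_k`, and the homomorphism from the
free product `(H_k ⧸ K_k) * (ℤ/2)` to `G_{k+1}^k ⧸ K_k`, induced on the first factor by the
inclusion `H_k → G_{k+1}^k` and sending the generator of `ℤ/2` to the class of `b_{k+1}`,
is an isomorphism. -/
theorem stmt_11 (k : ℕ) (hk : 2 ≤ k) :
    ∃ _ : (Kk k).Normal, Kk k ≤ Hk k ∧
      ∃ _ : ((Kk k).subgroupOf (Hk k)).Normal,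
        ∃ e : Monoid.Coprod ((Hk k) ⧸ ((Kk k).subgroupOf (Hk k))) (Multiplicative (ZMod 2)) ≃*
            ((Gnk k) ⧸ (Kk k)),
          (∀ h : Hk k, e (Monoid.Coprod.inl (QuotientGroup.mk h)) =
            QuotientGroup.mk (h : Gnk k)) ∧
          e (Monoid.Coprod.inr (Multiplicative.ofAdd 1)) =
            QuotientGroup.mk (PresentedGroup.of (rels := relsG k) (Fin.last k)) := by
  refine ⟨Stmt11.Kk_normal, Stmt11.Kk_le_Hk, Stmt11.instKHN k, Stmt11.eC k, ?_, ?_⟩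
  · intro h
    show Stmt11.fC k (Monoid.Coprod.inl (QuotientGroup.mk h)) = _
    rw [Stmt11.fC, Monoid.Coprod.lift_apply_inl, Stmt11.f₁_mk]
  · show Stmt11.fC k (Monoid.Coprod.inr (Multiplicative.ofAdd 1)) = _
    rw [Stmt11.fC, Monoid.Coprod.lift_apply_inr, Stmt11.f₂_ofAdd_one]
    rfl
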